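/- Let μ^N be an exchangeable probability measure on (ℝ^d)^N and ν a probability measure on ℝ^d, and let η ∈ (0,1]. For 1 ≤ k ≤ N, let μ^{[k],N} denote the marginal of μ^N on the first k coordinates. Then W̃_η(μ^{[k],N}, ν^{⊗k}) ≤ (k/N) W̃_η(μ^N, ν^{⊗N}), where W̃_η is the optimal transport cost with cost ‖x−y‖_{1,η} = Σ_i |x^i − y^i|^η. -/

import Mathlib

open MeasureTheory
open scoped ENNReal

section Aux
variable {E : Type*} [MeasurableSpace E]

lemma aux_rpow_add_le {η : ℝ} (hη0 : 0 ≤ η) (hη1 : η ≤ 1) {a b : ℝ} (ha : 0 ≤ a) (hb : 0 ≤ b) :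
    (a + b) ^ η ≤ a ^ η + b ^ η := by
  lift a to NNReal using ha
  lift b to NNReal using hb
  exact_mod_cast NNReal.rpow_add_le_add_rpow a b hη0 hη1

lemma aux_pi_map_eval {ι : Type*} [Fintype ι] [DecidableEq ι] (ν : ι → Measure E)
    [∀ i, IsProbabilityMeasure (ν i)] (m : ι) :
    (Measure.pi ν).map (fun y => y m) = ν m := by
  refine Measure.ext fun s hs => ?_
  rw [Measure.map_apply (measurable_pi_apply m) hs]
  have hpre : (fun y : ι → E => y m) ⁻¹' s
      = Set.pi Set.univ (fun j => if j = m then s else Set.univ) := by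
    ext y
    simp only [Set.mem_preimage, Set.mem_pi, Set.mem_univ, forall_true_left]
    constructor
    · intro h j
      by_cases hj : j = m
      · subst hj; simp [h]
      · simp [hj]
    · intro h
      have := h m
      simpa using this
  rw [hpre, Measure.pi_pi]
  rw [Finset.prod_eq_single m]
  · simp
  · intro j _ hj; simp [hj]
  · simp

lemma aux_pi_map_inj (ν : Measure E) [IsProbabilityMeasure ν]
    {k N : ℕ} (f : Fin k → Fin N) (hf : Function.Injective f) :
    (Measure.pi fun _ : Fin N => ν).map (fun y i => y (f i))
      = Measure.pi (fun _ : Fin k => ν) := by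
  classical
  refine (Measure.pi_eq fun s hs => ?_).symm
  have hm : Measurable fun (y : Fin N → E) i => y (f i) :=
    measurable_pi_lambda _ fun i => measurable_pi_apply _
  rw [Measure.map_apply hm (MeasurableSet.univ_pi hs)]
  have hpre : (fun (y : Fin N → E) i => y (f i)) ⁻¹' Set.pi Set.univ s
      = Set.pi Set.univ (fun j => ⋂ (i : Fin k) (_ : f i = j), s i) := by
    ext y
    simp only [Set.mem_preimage, Set.mem_pi, Set.mem_univ, forall_true_left, Set.mem_iInter]
    constructor
    · intro h j i hij; subst hij; exact h i
    · intro h i; exact h (f i) i rfl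
  rw [hpre, Measure.pi_pi]
  have ht : ∀ i : Fin k, (⋂ (i' : Fin k) (_ : f i' = f i), s i') = s i := by
    intro i
    apply Set.Subset.antisymm
    · intro x hx
      exact Set.mem_iInter.1 (Set.mem_iInter.1 hx i) rfl
    · intro x hx
      refine Set.mem_iInter.2 fun i' => Set.mem_iInter.2 fun hi' => ?_
      rwa [hf hi']
  rw [← Finset.prod_filter_mul_prod_filter_not Finset.univ (fun j => ∃ i, f i = j)]
  have h2 : ∀ j ∈ Finset.univ.filter (fun j => ¬ ∃ i, f i = j),
      ν (⋂ (i : Fin k) (_ : f i = j), s i) = 1 := by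
    intro j hj
    simp only [Finset.mem_filter, not_exists] at hj
    have : (⋂ (i : Fin k) (_ : f i = j), s i) = Set.univ := by
      ext x; simp only [Set.mem_iInter, Set.mem_univ, iff_true]
      intro i hi; exact absurd hi (hj.2 i)
    simp [this]
  rw [Finset.prod_congr rfl h2, Finset.prod_const_one, mul_one]
  have h3 : Finset.univ.filter (fun j => ∃ i, f i = j) = Finset.univ.image f := by
    ext j; simp [eq_comm]
  rw [h3, Finset.prod_image (fun a _ b _ h => hf h)]
  exact Finset.prod_congr rfl fun i _ => by rw [ht i]

lemma aux_map_sum {α β ι : Type*} [MeasurableSpace α] [MeasurableSpace β]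
    (s : Finset ι) (μ : ι → Measure α) {f : α → β} (hf : Measurable f) :
    (∑ i ∈ s, μ i).map f = ∑ i ∈ s, (μ i).map f := by
  classical
  induction s using Finset.induction_on with
  | empty => simp
  | insert a s ha ih =>
    rw [Finset.sum_insert ha, Finset.sum_insert ha, Measure.map_add _ _ hf, ih]

lemma aux_exch_map_inj {N : ℕ} (μN : Measure (Fin N → E))
    (hexch : ∀ σ : Equiv.Perm (Fin N), μN.map (fun x => x ∘ σ) = μN)
    {k : ℕ} (f g : Fin k → Fin N) (hf : Function.Injective f) (hg : Function.Injective g) :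
    μN.map (fun x i => x (f i)) = μN.map (fun x i => x (g i)) := by
  classical
  let e : {x // x ∈ Set.range g} ≃ {x // x ∈ Set.range f} :=
    (Equiv.ofInjective g hg).symm.trans (Equiv.ofInjective f hf)
  let τ : Equiv.Perm (Fin N) := e.extendSubtype
  have hτ : ∀ i, τ (g i) = f i := by
    intro i
    have h1 : τ (g i) = (e ⟨g i, ⟨i, rfl⟩⟩ : {x // x ∈ Set.range f}) :=
      Equiv.extendSubtype_apply_of_mem e (g i) ⟨i, rfl⟩
    rw [h1]
    show ((((Equiv.ofInjective g hg).symm.trans (Equiv.ofInjective f hf))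
      ⟨g i, ⟨i, rfl⟩⟩ : {x // x ∈ Set.range f}) : Fin N) = f i
    rw [Equiv.trans_apply]
    have h2 : (⟨g i, ⟨i, rfl⟩⟩ : {x // x ∈ Set.range g}) = Equiv.ofInjective g hg i := rfl
    rw [h2, Equiv.symm_apply_apply, Equiv.ofInjective_apply]
  have hcomp : (fun (x : Fin N → E) i => x (f i))
      = (fun (x : Fin N → E) i => x (g i)) ∘ (fun x => x ∘ τ) := by
    funext x
    funext i
    simp [Function.comp, hτ i]
  have hmg : Measurable fun (x : Fin N → E) i => x (g i) :=
    measurable_pi_lambda _ fun i => measurable_pi_apply _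
  have hmτ : Measurable fun (x : Fin N → E) => x ∘ τ :=
    measurable_pi_lambda _ fun i => measurable_pi_apply _
  rw [hcomp, ← Measure.map_map hmg hmτ, hexch τ]

end Aux

/-- The optimal transport cost between `μ` and `ν` for the cost function `c`. -/
noncomputable def transportCost {E : Type*} [MeasurableSpace E]
    (c : E → E → ℝ) (μ ν : Measure E) : ℝ :=
  sInf ((fun π : Measure (E × E) => ∫ p, c p.1 p.2 ∂π) ''
    {π | π.map Prod.fst = μ ∧ π.map Prod.snd = ν})

/-- For an exchangeable probability measure `μ^N` on `(ℝ^d)^N`, a probability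
measure `ν` on `ℝ^d`, `η ∈ (0,1]` and `1 ≤ k ≤ N`, the marginal `μ^{[k],N}` on
the first `k` coordinates satisfies
`W̃_η(μ^{[k],N}, ν^{⊗k}) ≤ (k/N) W̃_η(μ^N, ν^{⊗N})`, where `W̃_η` is the
transport cost for `‖x−y‖_{1,η} = ∑ᵢ |xⁱ − yⁱ|^η`. -/
theorem stmt_12 (d N : ℕ) (hN : 1 ≤ N) (η : ℝ) (hη : η ∈ Set.Ioc (0 : ℝ) 1)
    (μN : Measure (Fin N → EuclideanSpace ℝ (Fin d))) [IsProbabilityMeasure μN]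
    (hexch : ∀ σ : Equiv.Perm (Fin N),
      μN.map (fun x => x ∘ σ) = μN)
    (hμmom : Integrable (fun x => ∑ i, ‖x i‖ ^ η) μN)
    (ν : Measure (EuclideanSpace ℝ (Fin d))) [IsProbabilityMeasure ν]
    (hνmom : Integrable (fun y => ‖y‖ ^ η) ν)
    (k : ℕ) (hk1 : 1 ≤ k) (hk : k ≤ N) :
    transportCost (fun x y => ∑ i, ‖x i - y i‖ ^ η)
        (μN.map (fun x (i : Fin k) => x (Fin.castLE hk i)))
        (Measure.pi fun _ : Fin k => ν) ≤
      (k : ℝ) / N *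
        transportCost (fun x y => ∑ i, ‖x i - y i‖ ^ η) μN
          (Measure.pi fun _ : Fin N => ν) := by
  classical
  obtain ⟨hη0, hη1⟩ := hη
  haveI : NeZero N := ⟨by omega⟩
  set E := EuclideanSpace ℝ (Fin d) with hE
  set νN : Measure (Fin N → E) := Measure.pi fun _ => ν with hνN
  set νk : Measure (Fin k → E) := Measure.pi fun _ => ν with hνk
  set μk : Measure (Fin k → E) := μN.map (fun x (i : Fin k) => x (Fin.castLE hk i)) with hμk
  -- continuity of the cost functions
  have hckc : Continuous fun p : (Fin k → E) × (Fin k → E) => ∑ i, ‖p.1 i - p.2 i‖ ^ η := by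
    refine continuous_finset_sum _ fun i _ => ?_
    exact ((((continuous_apply i).comp continuous_fst).sub
      ((continuous_apply i).comp continuous_snd)).norm).rpow_const fun _ => Or.inr hη0.le
  -- the sets involved
  set SK := ((fun π : Measure ((Fin k → E) × (Fin k → E)) => ∫ p, ∑ i, ‖p.1 i - p.2 i‖ ^ η ∂π) ''
    {π | π.map Prod.fst = μk ∧ π.map Prod.snd = νk}) with hSK
  set SN := ((fun π : Measure ((Fin N → E) × (Fin N → E)) => ∫ p, ∑ i, ‖p.1 i - p.2 i‖ ^ η ∂π) ''
    {π | π.map Prod.fst = μN ∧ π.map Prod.snd = νN}) with hSN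
  have hgoal : transportCost (fun x y => ∑ i, ‖x i - y i‖ ^ η) μk νk = sInf SK := rfl
  have hgoal2 : transportCost (fun x y => ∑ i, ‖x i - y i‖ ^ η) μN νN = sInf SN := rfl
  rw [hgoal, hgoal2]
  have hbddK : BddBelow SK := by
    refine ⟨0, fun v hv => ?_⟩
    obtain ⟨π, -, rfl⟩ := hv
    exact integral_nonneg fun p =>
      Finset.sum_nonneg fun i _ => Real.rpow_nonneg (norm_nonneg _) η
  have hSNne : SN.Nonempty := by
    refine ⟨_, ⟨μN.prod νN, ⟨?_, ?_⟩, rfl⟩⟩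
    · rw [Measure.map_fst_prod]; simp
    · rw [Measure.map_snd_prod]; simp
  -- the key estimate for any coupling of μN and νN
  have key : ∀ r ∈ SN, sInf SK ≤ (k : ℝ) / N * r := by
    rintro r ⟨π, ⟨hfst, hsnd⟩, rfl⟩
    simp only []
    haveI : IsProbabilityMeasure π := by
      constructor
      have := congrArg (fun m : Measure (Fin N → E) => m Set.univ) hfst
      simpa [Measure.map_apply measurable_fst MeasurableSet.univ] using this
    -- coordinatewise integrability
    have hμcoord : ∀ m : Fin N, Integrable (fun x : Fin N → E => ‖x m‖ ^ η) μN := by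
      intro m
      refine hμmom.mono' (((continuous_apply m).norm.rpow_const
        fun _ => Or.inr hη0.le).aestronglyMeasurable) ?_
      filter_upwards with x
      rw [Real.norm_of_nonneg (Real.rpow_nonneg (norm_nonneg _) _)]
      exact Finset.single_le_sum (fun i _ => Real.rpow_nonneg (norm_nonneg _) η)
        (Finset.mem_univ m)
    have hνcoord : ∀ m : Fin N, Integrable (fun y : Fin N → E => ‖y m‖ ^ η) νN := by
      intro m
      have hmap : νN.map (fun y => y m) = ν := aux_pi_map_eval (fun _ : Fin N => ν) m
      have h := (integrable_map_measure
        (by rw [hmap]; exact hνmom.aestronglyMeasurable)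
        (measurable_pi_apply m).aemeasurable).1 (by rw [hmap]; exact hνmom)
      exact h
    have h1 : ∀ m : Fin N,
        Integrable (fun p : (Fin N → E) × (Fin N → E) => ‖p.1 m‖ ^ η) π := by
      intro m
      exact (integrable_map_measure (by rw [hfst]; exact (hμcoord m).aestronglyMeasurable)
        measurable_fst.aemeasurable).1 (by rw [hfst]; exact hμcoord m)
    have h2 : ∀ m : Fin N,
        Integrable (fun p : (Fin N → E) × (Fin N → E) => ‖p.2 m‖ ^ η) π := by
      intro m
      exact (integrable_map_measure (by rw [hsnd]; exact (hνcoord m).aestronglyMeasurable)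
        measurable_snd.aemeasurable).1 (by rw [hsnd]; exact hνcoord m)
    have hterm : ∀ m : Fin N,
        Integrable (fun p : (Fin N → E) × (Fin N → E) => ‖p.1 m - p.2 m‖ ^ η) π := by
      intro m
      refine ((h1 m).add (h2 m)).mono'
        (((((continuous_apply m).comp continuous_fst).sub
          ((continuous_apply m).comp continuous_snd)).norm.rpow_const
          fun _ => Or.inr hη0.le).aestronglyMeasurable) ?_
      filter_upwards with p
      rw [Real.norm_of_nonneg (Real.rpow_nonneg (norm_nonneg _) _)]
      calc ‖p.1 m - p.2 m‖ ^ η ≤ (‖p.1 m‖ + ‖p.2 m‖) ^ η :=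
            Real.rpow_le_rpow (norm_nonneg _) (norm_sub_le _ _) hη0.le
        _ ≤ ‖p.1 m‖ ^ η + ‖p.2 m‖ ^ η :=
            aux_rpow_add_le hη0.le hη1 (norm_nonneg _) (norm_nonneg _)
    set C : Fin N → ℝ := fun m => ∫ p : (Fin N → E) × (Fin N → E), ‖p.1 m - p.2 m‖ ^ η ∂π
      with hC
    have hrC : (∫ p : (Fin N → E) × (Fin N → E), ∑ m, ‖p.1 m - p.2 m‖ ^ η ∂π) = ∑ m, C m :=
      integral_finset_sum _ fun m _ => hterm m
    -- the shifted projections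
    set f : Fin N → Fin k → Fin N := fun j i => Fin.castLE hk i + j with hf
    have hfinj : ∀ j, Function.Injective (f j) := by
      intro j a b hab
      exact Fin.castLE_injective hk (add_right_cancel hab)
    set T : Fin N → ((Fin N → E) × (Fin N → E)) → ((Fin k → E) × (Fin k → E)) :=
      fun j p => (fun i => p.1 (f j i), fun i => p.2 (f j i)) with hT
    have hPrm : ∀ j, Measurable fun (x : Fin N → E) (i : Fin k) => x (f j i) :=
      fun j => measurable_pi_lambda _ fun i => measurable_pi_apply _
    have hTm : ∀ j, Measurable (T j) := fun j =>
      (((hPrm j).comp measurable_fst)).prodMk ((hPrm j).comp measurable_snd)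
    have hPr1 : ∀ j, (π.map (T j)).map Prod.fst = μk := by
      intro j
      rw [Measure.map_map measurable_fst (hTm j)]
      have hco : (Prod.fst ∘ T j) = (fun (x : Fin N → E) (i : Fin k) => x (f j i)) ∘ Prod.fst :=
        rfl
      rw [hco, ← Measure.map_map (hPrm j) measurable_fst, hfst, hμk]
      exact aux_exch_map_inj μN hexch (f j) (Fin.castLE hk) (hfinj j) (Fin.castLE_injective hk)
    have hPr2 : ∀ j, (π.map (T j)).map Prod.snd = νk := by
      intro j
      rw [Measure.map_map measurable_snd (hTm j)]
      have hco : (Prod.snd ∘ T j) = (fun (y : Fin N → E) (i : Fin k) => y (f j i)) ∘ Prod.snd :=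
        rfl
      rw [hco, ← Measure.map_map (hPrm j) measurable_snd, hsnd, hνk, hνN]
      exact aux_pi_map_inj ν (f j) (hfinj j)
    have hckj : ∀ j, Integrable
        (fun p : (Fin k → E) × (Fin k → E) => ∑ i, ‖p.1 i - p.2 i‖ ^ η) (π.map (T j)) := by
      intro j
      rw [integrable_map_measure hckc.aestronglyMeasurable (hTm j).aemeasurable]
      have : ((fun p : (Fin k → E) × (Fin k → E) => ∑ i, ‖p.1 i - p.2 i‖ ^ η) ∘ T j)
          = fun p : (Fin N → E) × (Fin N → E) =>
              ∑ i : Fin k, ‖p.1 (f j i) - p.2 (f j i)‖ ^ η := rfl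
      rw [this]
      exact integrable_finset_sum _ fun i _ => hterm (f j i)
    have hcost : ∀ j, (∫ p, ∑ i, ‖p.1 i - p.2 i‖ ^ η ∂(π.map (T j)))
        = ∑ i : Fin k, C (f j i) := by
      intro j
      rw [integral_map (hTm j).aemeasurable hckc.aestronglyMeasurable]
      exact integral_finset_sum _ fun i _ => hterm (f j i)
    set πb : Measure ((Fin k → E) × (Fin k → E)) :=
      ((N : ℝ≥0∞))⁻¹ • ∑ j : Fin N, π.map (T j) with hπb
    have hNe0 : (N : ℝ≥0∞) ≠ 0 := Nat.cast_ne_zero.2 (by omega)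
    have hbar1 : πb.map Prod.fst = μk := by
      rw [hπb, Measure.map_smul, aux_map_sum _ _ measurable_fst]
      simp only [hPr1]
      rw [Finset.sum_const, Finset.card_univ, Fintype.card_fin,
        ← Nat.cast_smul_eq_nsmul ℝ≥0∞, smul_smul,
        ENNReal.inv_mul_cancel hNe0 (ENNReal.natCast_ne_top N), one_smul]
    have hbar2 : πb.map Prod.snd = νk := by
      rw [hπb, Measure.map_smul, aux_map_sum _ _ measurable_snd]
      simp only [hPr2]
      rw [Finset.sum_const, Finset.card_univ, Fintype.card_fin,
        ← Nat.cast_smul_eq_nsmul ℝ≥0∞, smul_smul,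
        ENNReal.inv_mul_cancel hNe0 (ENNReal.natCast_ne_top N), one_smul]
    have hbarcost : (∫ p, ∑ i, ‖p.1 i - p.2 i‖ ^ η ∂πb)
        = (k : ℝ) / N * ∑ m, C m := by
      rw [hπb, integral_smul_measure, integral_finset_sum_measure fun j _ => hckj j]
      simp only [hcost]
      rw [Finset.sum_comm]
      have hswap : ∀ i : Fin k, ∑ j : Fin N, C (f j i) = ∑ m, C m := by
        intro i
        exact Fintype.sum_equiv (Equiv.addLeft (Fin.castLE hk i)) _ _ fun j => by
          simp [hf, add_comm]
      rw [Finset.sum_congr rfl fun i _ => hswap i, Finset.sum_const, Finset.card_univ,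
        Fintype.card_fin]
      rw [nsmul_eq_mul, smul_eq_mul, ENNReal.toReal_inv, ENNReal.toReal_natCast]
      ring
    calc sInf SK ≤ ∫ p, ∑ i, ‖p.1 i - p.2 i‖ ^ η ∂πb :=
          csInf_le hbddK ⟨πb, ⟨hbar1, hbar2⟩, rfl⟩
      _ = (k : ℝ) / N * ∑ m, C m := hbarcost
      _ = (k : ℝ) / N * ∫ p, ∑ m, ‖p.1 m - p.2 m‖ ^ η ∂π := by rw [hrC]
  -- conclude
  have hk0 : (0 : ℝ) < k := by exact_mod_cast hk1
  have hN0 : (0 : ℝ) < N := by exact_mod_cast hN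
  have h2 : (N : ℝ) / k * sInf SK ≤ sInf SN := by
    refine le_csInf hSNne fun r hr => ?_
    have h3 := mul_le_mul_of_nonneg_left (key r hr) (le_of_lt (div_pos hN0 hk0))
    calc (N : ℝ) / k * sInf SK ≤ (N : ℝ) / k * ((k : ℝ) / N * r) := h3
      _ = r := by field_simp
  have h4 := mul_le_mul_of_nonneg_left h2 (le_of_lt (div_pos hk0 hN0))
  calc sInf SK = (k : ℝ) / N * ((N : ℝ) / k * sInf SK) := by field_simp
    _ ≤ (k : ℝ) / N * sInf SN := h4
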